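/- Let A be an n×n integer matrix with det A ≠ 0, let m ∈ ℤ, and set B = A + m·I. Then for every prime p not dividing m, the p-primary component of ℤⁿ/Im(A·B) is isomorphic to the direct sum of the p-primary components of ℤⁿ/Im(A) and ℤⁿ/Im(B). -/

import Mathlib

open Matrix

private lemma mem_primary_iff' {G : Type*} [AddCommGroup G] (p : ℕ) [hp : Fact p.Prime] (x : G) :
    x ∈ AddCommGroup.primaryComponent G p ↔ ∃ k : ℕ, p ^ k • x = 0 := by
  constructor
  · rintro ⟨k, hk⟩
    exact ⟨k, hk⟩
  · rintro ⟨k, hk⟩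
    obtain ⟨j, _, hj'⟩ := (Nat.dvd_prime_pow hp.out).mp (addOrderOf_dvd_of_nsmul_eq_zero hk)
    exact ⟨k, hk⟩

theorem stmt18 (n : ℕ) (A : Matrix (Fin n) (Fin n) ℤ) (m : ℤ)
    (hA : A.det ≠ 0) (hB : (A + m • 1).det ≠ 0)
    (p : ℕ) [Fact p.Prime] (hpm : ¬ (p : ℤ) ∣ m) :
    Nonempty
      ((AddCommGroup.primaryComponent
          ((Fin n → ℤ) ⧸ LinearMap.range (Matrix.toLin' (A * (A + m • 1)))) p) ≃+
        (AddCommGroup.primaryComponent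
          (((Fin n → ℤ) ⧸ LinearMap.range (Matrix.toLin' A)) ×
            ((Fin n → ℤ) ⧸ LinearMap.range (Matrix.toLin' (A + m • 1)))) p)) := by
  classical
  set B : Matrix (Fin n) (Fin n) ℤ := A + m • 1 with hBdef
  have hcomm : A * B = B * A := by
    rw [hBdef, Matrix.mul_add, Matrix.add_mul, Matrix.mul_smul, Matrix.smul_mul,
      Matrix.mul_one, Matrix.one_mul]
  set lA := Matrix.toLin' A with hlA
  set lB := Matrix.toLin' B with hlB
  set lC := Matrix.toLin' (A * B) with hlC
  have hAB : ∀ v, lC v = lA (lB v) := by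
    intro v; rw [hlC, Matrix.toLin'_mul]; rfl
  have hBA : ∀ v, lC v = lB (lA v) := by
    intro v; rw [hlC, hcomm, Matrix.toLin'_mul]; rfl
  have hBvv : ∀ v, lB v = lA v + m • v := by
    intro v
    rw [hlB, hBdef]
    simp [hlA, Matrix.toLin'_apply, Matrix.add_mulVec, Matrix.smul_mulVec,
      Matrix.one_mulVec]
  set rα := LinearMap.range lA with hrα
  set rβ := LinearMap.range lB with hrβ
  set rγ := LinearMap.range lC with hrγ
  have hγα : rγ ≤ rα := by
    rintro v ⟨x, rfl⟩; exact ⟨lB x, (hAB x).symm⟩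
  have hγβ : rγ ≤ rβ := by
    rintro v ⟨x, rfl⟩; exact ⟨lA x, (hBA x).symm⟩
  -- the quotient maps
  let fA : ((Fin n → ℤ) ⧸ rγ) →ₗ[ℤ] (Fin n → ℤ) ⧸ rα :=
    Submodule.mapQ rγ rα LinearMap.id (fun x hx => hγα hx)
  let fB : ((Fin n → ℤ) ⧸ rγ) →ₗ[ℤ] (Fin n → ℤ) ⧸ rβ :=
    Submodule.mapQ rγ rβ LinearMap.id (fun x hx => hγβ hx)
  let Φ : ((Fin n → ℤ) ⧸ rγ) →ₗ[ℤ]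
      ((Fin n → ℤ) ⧸ rα) × ((Fin n → ℤ) ⧸ rβ) := LinearMap.prod fA fB
  have hΦmem : ∀ x : (Fin n → ℤ) ⧸ rγ, x ∈ AddCommGroup.primaryComponent _ p →
      Φ x ∈ AddCommGroup.primaryComponent _ p := by
    intro x hx
    rw [mem_primary_iff'] at hx ⊢
    obtain ⟨k, hk⟩ := hx
    exact ⟨k, by rw [← map_nsmul, hk, map_zero]⟩
  -- coprimality helper
  have hcop : ∀ k : ℕ, ∃ a b : ℤ, a * (p : ℤ) ^ k + b * m = 1 := by
    intro k
    have h1 : IsCoprime ((p : ℤ)) m :=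
      (Nat.prime_iff_prime_int.mp (Fact.out)).coprime_iff_not_dvd.mpr hpm
    exact (h1.pow_left : IsCoprime ((p:ℤ)^k) m)
  -- build the hom
  let Ψ : (AddCommGroup.primaryComponent ((Fin n → ℤ) ⧸ rγ) p) →+
      (AddCommGroup.primaryComponent
        (((Fin n → ℤ) ⧸ rα) × ((Fin n → ℤ) ⧸ rβ)) p) :=
    { toFun := fun x => ⟨Φ x.1, hΦmem x.1 x.2⟩
      map_zero' := by ext : 1; simp
      map_add' := by intro x y; ext : 1; simp }
  refine ⟨AddEquiv.ofBijective Ψ ⟨?_, ?_⟩⟩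
  · -- injective
    rw [injective_iff_map_eq_zero]
    rintro ⟨x, hx⟩ hΨx
    have hΦx : Φ x = 0 := congrArg Subtype.val hΨx
    obtain ⟨v, rfl⟩ := Submodule.Quotient.mk_surjective rγ x
    have h1 : fA (Submodule.Quotient.mk v) = 0 := congrArg Prod.fst hΦx
    have h2 : fB (Submodule.Quotient.mk v) = 0 := congrArg Prod.snd hΦx
    rw [Submodule.mapQ_apply, LinearMap.id_apply, Submodule.Quotient.mk_eq_zero] at h1 h2
    obtain ⟨s, hs⟩ := h1
    obtain ⟨t, ht⟩ := h2
    have hmv : m • Submodule.Quotient.mk v = (0 : (Fin n → ℤ) ⧸ rγ) := by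
      rw [← Submodule.Quotient.mk_smul, Submodule.Quotient.mk_eq_zero]
      refine ⟨s - t, ?_⟩
      have : m • v = lB v - lA v := by rw [hBvv v]; abel
      rw [map_sub, hBA, hAB, hs, ht, this]
    obtain ⟨k, hk⟩ := (mem_primary_iff' p _).mp hx
    obtain ⟨a, b, hab⟩ := hcop k
    have hpk : ((p : ℤ) ^ k) • Submodule.Quotient.mk v = (0 : (Fin n → ℤ) ⧸ rγ) := by
      have := hk
      rw [← natCast_zsmul] at this
      push_cast at this
      exact this
    ext : 1
    have : (1 : ℤ) • Submodule.Quotient.mk v = (0 : (Fin n → ℤ) ⧸ rγ) := by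
      rw [← hab, add_smul, mul_smul, mul_smul, hpk, hmv, smul_zero, smul_zero, add_zero]
    simpa using this
  · -- surjective
    rintro ⟨⟨y, z⟩, hyz⟩
    obtain ⟨K, hK⟩ := (mem_primary_iff' p _).mp hyz
    have hKy : (p : ℤ) ^ K • y = 0 := by
      have h : p ^ K • y = (0 : (Fin n → ℤ) ⧸ rα) := by
        have := congrArg Prod.fst hK; simpa using this
      have h2 : ((p ^ K : ℕ) : ℤ) • y = 0 := by rw [natCast_zsmul]; exact h
      simpa using h2
    have hKz : (p : ℤ) ^ K • z = 0 := by
      have h : p ^ K • z = (0 : (Fin n → ℤ) ⧸ rβ) := by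
        have := congrArg Prod.snd hK; simpa using this
      have h2 : ((p ^ K : ℕ) : ℤ) • z = 0 := by rw [natCast_zsmul]; exact h
      simpa using h2
    obtain ⟨u, rfl⟩ := Submodule.Quotient.mk_surjective rα y
    obtain ⟨w, rfl⟩ := Submodule.Quotient.mk_surjective rβ z
    set q : ℤ := (p : ℤ) ^ K with hq
    rw [← Submodule.Quotient.mk_smul, Submodule.Quotient.mk_eq_zero] at hKy hKz
    obtain ⟨a0, ha0⟩ := hKy
    obtain ⟨b0, hb0⟩ := hKz
    obtain ⟨a, b, hab⟩ := hcop K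
    set v : Fin n → ℤ := b • lB u - b • lA w with hv
    have hmemv : Submodule.Quotient.mk v ∈
        AddCommGroup.primaryComponent ((Fin n → ℤ) ⧸ rγ) p := by
      rw [mem_primary_iff']
      refine ⟨K, ?_⟩
      rw [← natCast_zsmul]
      push_cast
      rw [← Submodule.Quotient.mk_smul, Submodule.Quotient.mk_eq_zero]
      refine ⟨b • a0 - b • b0, ?_⟩
      have e1 : lC a0 = q • lB u := by rw [hBA, ha0, _root_.map_smul]
      have e2 : lC b0 = q • lA w := by rw [hAB, hb0, _root_.map_smul]
      rw [map_sub, _root_.map_smul, _root_.map_smul, e1, e2, hv, hq]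
      match_scalars <;> ring
    refine ⟨⟨Submodule.Quotient.mk v, hmemv⟩, ?_⟩
    ext : 1
    refine Prod.ext ?_ ?_
    · show fA (Submodule.Quotient.mk v) = Submodule.Quotient.mk u
      rw [Submodule.mapQ_apply, LinearMap.id_apply, Submodule.Quotient.eq]
      refine ⟨b • u - b • w - a • a0, ?_⟩
      rw [map_sub, map_sub, _root_.map_smul, _root_.map_smul, _root_.map_smul, ha0, hv,
        hBvv u, hq]
      match_scalars <;> first | linear_combination (0 : ℤ) * hab | linear_combination hab | linear_combination -1 * hab
    · show fB (Submodule.Quotient.mk v) = Submodule.Quotient.mk w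
      rw [Submodule.mapQ_apply, LinearMap.id_apply, Submodule.Quotient.eq]
      refine ⟨b • u - a • b0 - b • w, ?_⟩
      rw [map_sub, map_sub, _root_.map_smul, _root_.map_smul, _root_.map_smul, hb0, hv,
        hBvv w, hq]
      match_scalars <;> first | linear_combination (0 : ℤ) * hab | linear_combination hab | linear_combination -1 * hab
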